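/- Let f : ℂ → ℂ, let α ∈ ℂ with α ≠ 0, and define f^α : ℂ → ℂ by f^α(w) = f(α⁻¹·w). Let I ⊆ ℝ be an interval and let z : ℝ → ℂ satisfy: for every t ∈ I, f is complex differentiable at z(t) and z has derivative V_f(z(t)) at t. Then w(t) := α·z(t) satisfies, for every t ∈ I, that w has derivative |α|² · V_{f^α}(w(t)) at t. Hence the map z ↦ αz carries trajectories of the desingularized Newton flow of f onto trajectories of the desingularized Newton flow of f^α, preserving orientation. -/

import Mathlib

open Complex

/-- The desingularized Newton field of `f`. -/
noncomputable def desingNewton (f : ℂ → ℂ) (z : ℂ) : ℂ :=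
  -(((1 + ‖f z‖ ^ 4 : ℝ) : ℂ))⁻¹ * (starRingEnd ℂ) (deriv f z) * f z

/-- The map `z ↦ αz` carries trajectories of the desingularized Newton
flow of `f` onto trajectories of the desingularized Newton flow of
`f^α : w ↦ f(α⁻¹ w)` (up to the positive factor `|α|²`), preserving orientation. -/
theorem desingNewton_scaling_of_lattice
    (f : ℂ → ℂ) (α : ℂ) (hα : α ≠ 0)
    (I : Set ℝ) (hI : I.OrdConnected) (z : ℝ → ℂ)
    (hz : ∀ t ∈ I, DifferentiableAt ℂ f (z t) ∧ HasDerivAt z (desingNewton f (z t)) t) :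
    ∀ t ∈ I, HasDerivAt (fun s => α * z s)
      ((‖α‖ ^ 2 : ℝ) • desingNewton (fun w => f (α⁻¹ * w)) (α * z t)) t := by
  intro t ht
  obtain ⟨hdiff, hder⟩ := hz t ht
  have hinv : α⁻¹ * (α * z t) = z t := by field_simp
  -- derivative of the rescaled function
  have hg : HasDerivAt (fun w => f (α⁻¹ * w)) (deriv f (z t) * α⁻¹) (α * z t) := by
    have h1 : HasDerivAt (fun w : ℂ => α⁻¹ * w) α⁻¹ (α * z t) := by
      simpa using (hasDerivAt_id (α * z t)).const_mul α⁻¹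
    have h2 : HasDerivAt f (deriv f (z t)) (α⁻¹ * (α * z t)) := by
      rw [hinv]; exact hdiff.hasDerivAt
    simpa [Function.comp_def] using h2.comp (α * z t) h1
  have hgd : deriv (fun w => f (α⁻¹ * w)) (α * z t) = α⁻¹ * deriv f (z t) := by
    rw [hg.deriv, mul_comm]
  have key : ((‖α‖ ^ 2 : ℝ) : ℂ) * desingNewton (fun w => f (α⁻¹ * w)) (α * z t)
      = α * desingNewton f (z t) := by
    unfold desingNewton
    simp only [hgd, hinv, map_mul]
    have habs : ((‖α‖ ^ 2 : ℝ) : ℂ) = α * (starRingEnd ℂ) α := by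
      rw [Complex.mul_conj]
      norm_cast
      exact Complex.sq_norm α
    have hconj : (starRingEnd ℂ) α⁻¹ = ((starRingEnd ℂ) α)⁻¹ := by
      simp [map_inv₀]
    have hne : (starRingEnd ℂ) α ≠ 0 := by simpa using hα
    have h1 : (1 + ((‖f (z t)‖ : ℂ)) ^ 4) ≠ 0 := by
      have h0 : (1 + ((‖f (z t)‖ : ℂ)) ^ 4)
          = ((1 + ‖f (z t)‖ ^ 4 : ℝ) : ℂ) := by push_cast; ring
      rw [h0]
      exact_mod_cast (by positivity : (0:ℝ) < 1 + ‖f (z t)‖ ^ 4).ne'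
    rw [habs, hconj]
    field_simp
  have := hder.const_mul α
  rw [Complex.real_smul]
  exact key ▸ this
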